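/- Stationarity of GNAR processes (Theorem 1, stated in its equivalent VAR stability form): if the global-α GNAR coefficients satisfy Σ_{k=1}^p ( |α_k| + Σ_{r=1}^{s_k} |β_{kr}| ) < 1, then for every complex number z with |z| ≤ 1 the complex d×d matrix I_d − Σ_{k=1}^p Φ_k z^k is invertible (equivalently, det( I_d − Σ_{k=1}^p Φ_k z^k ) ≠ 0), which is the stability condition guaranteeing that the GNAR(p,[s_1,…,s_p]) process over a static network is stationary. -/

import Mathlib

open scoped BigOperators

/-- **Stationarity of GNAR processes** (Theorem 1, VAR stability form):
if the global-α GNAR coefficients satisfy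
`Σ_{k=1}^p (|α_k| + Σ_{r=1}^{s_k} |β_{kr}|) < 1`, then for every complex `z`
with `|z| ≤ 1` the matrix `I_d − Σ_{k=1}^p Φ_k z^k` has nonzero determinant. -/
theorem gnar_stationarity
    (d p : ℕ) (hd : 1 ≤ d) (hp : 1 ≤ p)
    (s : Fin p → ℕ) (hs : ∀ k, 1 ≤ s k)
    (α : Fin p → ℝ) (β : (k : Fin p) → Fin (s k) → ℝ)
    (B : ℕ → Matrix (Fin d) (Fin d) ℝ)
    (hBnn : ∀ r i j, 0 ≤ B r i j)
    (hBrow : ∀ r i, ∑ j, B r i j ≤ 1)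
    (Φ : Fin p → Matrix (Fin d) (Fin d) ℝ)
    (hΦ : ∀ k, Φ k =
      α k • (1 : Matrix (Fin d) (Fin d) ℝ) + ∑ r : Fin (s k), β k r • B (r.1 + 1))
    (hcoef : ∑ k, (|α k| + ∑ r : Fin (s k), |β k r|) < 1) :
    ∀ z : ℂ, ‖z‖ ≤ 1 →
      ((1 : Matrix (Fin d) (Fin d) ℂ)
        - ∑ k : Fin p, z ^ (k.1 + 1) • (Φ k).map (Complex.ofReal)).det ≠ 0 := by
  intro z hz hdet
  obtain ⟨v, hv0, hv⟩ := Matrix.exists_mulVec_eq_zero_iff.mpr hdet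
  -- row sums of |Φ k| are bounded
  have hrow : ∀ (k : Fin p) (i : Fin d),
      ∑ j, |Φ k i j| ≤ |α k| + ∑ r : Fin (s k), |β k r| := by
    intro k i
    have h1 : ∀ j, |Φ k i j| ≤
        |α k| * (1 : Matrix (Fin d) (Fin d) ℝ) i j
          + ∑ r : Fin (s k), |β k r| * B (r.1 + 1) i j := by
      intro j
      rw [hΦ k]
      simp only [Matrix.add_apply, Matrix.smul_apply, Matrix.sum_apply, smul_eq_mul]
      refine le_trans (abs_add_le _ _) (add_le_add ?_ ?_)
      · rw [abs_mul]
        rcases eq_or_ne i j with h | h <;> simp [Matrix.one_apply, h]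
      · refine le_trans (Finset.abs_sum_le_sum_abs _ _) (Finset.sum_le_sum fun r _ => ?_)
        rw [abs_mul, abs_of_nonneg (hBnn _ _ _)]
    calc ∑ j, |Φ k i j|
        ≤ ∑ j, (|α k| * (1 : Matrix (Fin d) (Fin d) ℝ) i j
            + ∑ r : Fin (s k), |β k r| * B (r.1 + 1) i j) :=
          Finset.sum_le_sum fun j _ => h1 j
      _ = |α k| + ∑ r : Fin (s k), |β k r| * ∑ j, B (r.1 + 1) i j := by
          rw [Finset.sum_add_distrib, ← Finset.mul_sum]
          rw [Finset.sum_comm]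
          simp [Matrix.one_apply, Finset.mul_sum]
      _ ≤ |α k| + ∑ r : Fin (s k), |β k r| * 1 :=
          add_le_add_right (Finset.sum_le_sum fun r _ =>
            mul_le_mul_of_nonneg_left (hBrow _ _) (abs_nonneg _)) _
      _ = |α k| + ∑ r : Fin (s k), |β k r| := by simp
  -- pick index of max modulus
  haveI : Nonempty (Fin d) := ⟨⟨0, hd⟩⟩
  obtain ⟨i, -, hi⟩ := Finset.exists_max_image Finset.univ (fun i => ‖v i‖)
    ⟨Classical.arbitrary (Fin d), Finset.mem_univ _⟩
  have hipos : 0 < ‖v i‖ := by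
    obtain ⟨j, hj⟩ := Function.ne_iff.mp hv0
    exact lt_of_lt_of_le (norm_pos_iff.mpr hj) (hi j (Finset.mem_univ j))
  -- fixed point equation at row i
  have hveq : v i = ∑ k : Fin p, z ^ (k.1 + 1) * ∑ j, (Φ k i j : ℂ) * v j := by
    have h := congrFun hv i
    simp only [Matrix.sub_mulVec, Pi.sub_apply, Matrix.one_mulVec, Pi.zero_apply,
      sub_eq_zero] at h
    rw [h]
    simp only [Matrix.mulVec, dotProduct, Matrix.sum_apply, Matrix.smul_apply,
      smul_eq_mul, Matrix.map_apply, Finset.sum_mul, Finset.mul_sum, mul_assoc]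
    exact Finset.sum_comm
  -- per-term estimate
  have hterm : ∀ k : Fin p,
      ‖z ^ (k.1 + 1) * ∑ j, (Φ k i j : ℂ) * v j‖
        ≤ (|α k| + ∑ r : Fin (s k), |β k r|) * ‖v i‖ := by
    intro k
    rw [norm_mul, norm_pow]
    have hz1 : ‖z‖ ^ (k.1 + 1) ≤ 1 := pow_le_one₀ (norm_nonneg _) hz
    have hS : ‖∑ j, (Φ k i j : ℂ) * v j‖ ≤ (|α k| + ∑ r : Fin (s k), |β k r|) * ‖v i‖ := by
      calc ‖∑ j, (Φ k i j : ℂ) * v j‖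
          ≤ ∑ j, ‖(Φ k i j : ℂ) * v j‖ := norm_sum_le _ _
        _ = ∑ j, |Φ k i j| * ‖v j‖ := by
            simp [norm_mul, Complex.norm_real, Real.norm_eq_abs]
        _ ≤ ∑ j, |Φ k i j| * ‖v i‖ :=
            Finset.sum_le_sum fun j _ =>
              mul_le_mul_of_nonneg_left (hi j (Finset.mem_univ j)) (abs_nonneg _)
        _ = (∑ j, |Φ k i j|) * ‖v i‖ := (Finset.sum_mul _ _ _).symm
        _ ≤ (|α k| + ∑ r : Fin (s k), |β k r|) * ‖v i‖ :=
            mul_le_mul_of_nonneg_right (hrow k i) (norm_nonneg _)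
    calc ‖z‖ ^ (k.1 + 1) * ‖∑ j, (Φ k i j : ℂ) * v j‖
        ≤ 1 * ‖∑ j, (Φ k i j : ℂ) * v j‖ :=
          mul_le_mul_of_nonneg_right hz1 (norm_nonneg _)
      _ = ‖∑ j, (Φ k i j : ℂ) * v j‖ := one_mul _
      _ ≤ _ := hS
  have : ‖v i‖ < ‖v i‖ := by
    calc ‖v i‖ = ‖∑ k : Fin p, z ^ (k.1 + 1) * ∑ j, (Φ k i j : ℂ) * v j‖ := by rw [← hveq]
      _ ≤ ∑ k : Fin p, ‖z ^ (k.1 + 1) * ∑ j, (Φ k i j : ℂ) * v j‖ := norm_sum_le _ _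
      _ ≤ ∑ k : Fin p, (|α k| + ∑ r : Fin (s k), |β k r|) * ‖v i‖ :=
          Finset.sum_le_sum fun k _ => hterm k
      _ = (∑ k, (|α k| + ∑ r : Fin (s k), |β k r|)) * ‖v i‖ := (Finset.sum_mul _ _ _).symm
      _ < 1 * ‖v i‖ := mul_lt_mul_of_pos_right hcoef hipos
      _ = ‖v i‖ := one_mul _
  exact absurd this (lt_irrefl _)
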